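/- Alon–Füredi bound: let F ∈ F[x₁,...,xₘ] and S = S₁×···×Sₘ a finite grid. If F does not vanish at every point of S, then the number of points of S where F is nonzero is at least min{∏_{j=1}^m y_j : 1 ≤ y_j ≤ #S_j for all j, and Σ_j y_j ≥ Σ_j #S_j − deg F}. -/

import Mathlib

namespace AlonFurediAux

open MvPolynomial Polynomial

variable {K : Type*} [Field K] {m : ℕ}

/-- "Total degree" of a polynomial over a multivariate polynomial ring, via `finSuccEquiv`. -/
noncomputable def D (P : Polynomial (MvPolynomial (Fin m) K)) : ℕ :=
  ((MvPolynomial.finSuccEquiv K m).symm P).totalDegree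

lemma D_coeff_le {P : Polynomial (MvPolynomial (Fin m) K)} {i : ℕ} (h : P.coeff i ≠ 0) :
    (P.coeff i).totalDegree + i ≤ D P := by
  have := MvPolynomial.totalDegree_coeff_finSuccEquiv_add_le
    ((MvPolynomial.finSuccEquiv K m).symm P) i (by
      rw [(MvPolynomial.finSuccEquiv K m).apply_symm_apply]; exact h)
  rwa [(MvPolynomial.finSuccEquiv K m).apply_symm_apply] at this

lemma D_apply (F : MvPolynomial (Fin (m+1)) K) :
    D (MvPolynomial.finSuccEquiv K m F) = F.totalDegree := by
  rw [D, (MvPolynomial.finSuccEquiv K m).symm_apply_apply]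

lemma finSuccEquiv_rename_succ (p : MvPolynomial (Fin m) K) :
    MvPolynomial.finSuccEquiv K m (MvPolynomial.rename Fin.succ p) = Polynomial.C p := by
  induction p using MvPolynomial.induction_on with
  | C a => simp [MvPolynomial.finSuccEquiv_apply]
  | add p q hp hq => simp [hp, hq]
  | mul_X p i hp => simp [hp, MvPolynomial.finSuccEquiv_X_succ]

lemma D_C (p : MvPolynomial (Fin m) K) : D (Polynomial.C p) ≤ p.totalDegree := by
  rw [D, ← finSuccEquiv_rename_succ p, (MvPolynomial.finSuccEquiv K m).symm_apply_apply]
  exact MvPolynomial.totalDegree_rename_le _ _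

lemma symm_X : (MvPolynomial.finSuccEquiv K m).symm Polynomial.X = MvPolynomial.X 0 := by
  rw [(MvPolynomial.finSuccEquiv K m).symm_apply_eq, MvPolynomial.finSuccEquiv_X_zero]

lemma symm_CC (c : K) : (MvPolynomial.finSuccEquiv K m).symm
    (Polynomial.C (MvPolynomial.C c)) = MvPolynomial.C c := by
  rw [(MvPolynomial.finSuccEquiv K m).symm_apply_eq]
  simp [MvPolynomial.finSuccEquiv_apply]

lemma D_X_pow (k : ℕ) : D (Polynomial.X ^ k : Polynomial (MvPolynomial (Fin m) K)) ≤ k := by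
  rw [D, map_pow, symm_X]
  calc (MvPolynomial.X (0 : Fin (m+1)) ^ k).totalDegree
      ≤ k * (MvPolynomial.X (0 : Fin (m+1)) : MvPolynomial (Fin (m+1)) K).totalDegree :=
        MvPolynomial.totalDegree_pow _ _
    _ ≤ k := by rw [MvPolynomial.totalDegree_X]; omega

lemma D_mul_le (P Q : Polynomial (MvPolynomial (Fin m) K)) : D (P * Q) ≤ D P + D Q := by
  rw [D, map_mul]
  exact MvPolynomial.totalDegree_mul _ _

lemma D_sub_le (P Q : Polynomial (MvPolynomial (Fin m) K)) : D (P - Q) ≤ max (D P) (D Q) := by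
  rw [D, map_sub]
  exact MvPolynomial.totalDegree_sub _ _

/-- The grid polynomial `∏ (X - c)` lifted to coefficients in `MvPolynomial`. -/
noncomputable def g (m : ℕ) (s : Finset K) : Polynomial (MvPolynomial (Fin m) K) :=
  (∏ c ∈ s, (Polynomial.X - Polynomial.C c)).map MvPolynomial.C

lemma g_eq (s : Finset K) :
    g m s = ∏ c ∈ s, (Polynomial.X - Polynomial.C (MvPolynomial.C c)) := by
  rw [g, ← Polynomial.coe_mapRingHom, map_prod]
  exact Finset.prod_congr rfl fun c _ => by simp

lemma monic_g (s : Finset K) : (g m s).Monic := by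
  rw [g_eq]
  exact monic_prod_of_monic _ _ fun c _ => monic_X_sub_C _

lemma natDegree_g (s : Finset K) : (g m s).natDegree = s.card := by
  rw [g_eq, Polynomial.natDegree_prod _ _ (fun c _ => X_sub_C_ne_zero _)]
  simp

lemma D_g_le (s : Finset K) : D (g m s) ≤ s.card := by
  rw [D, g_eq, map_prod]
  refine (MvPolynomial.totalDegree_finset_prod _ _).trans ?_
  have hb : ∀ c ∈ s, (((MvPolynomial.finSuccEquiv K m).symm
      (Polynomial.X - Polynomial.C (MvPolynomial.C c))).totalDegree) ≤ 1 := by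
    intro c _
    rw [map_sub, symm_X, symm_CC]
    refine (MvPolynomial.totalDegree_sub _ _).trans ?_
    rw [MvPolynomial.totalDegree_X, MvPolynomial.totalDegree_C]
    omega
  calc (∑ c ∈ s, ((MvPolynomial.finSuccEquiv K m).symm
        (Polynomial.X - Polynomial.C (MvPolynomial.C c))).totalDegree)
      ≤ ∑ _c ∈ s, 1 := Finset.sum_le_sum hb
    _ = s.card := by simp

lemma D_modByMonic_le (s : Finset K) (hs : s.Nonempty) (P : Polynomial (MvPolynomial (Fin m) K)) :
    D (P %ₘ g m s) ≤ D P := by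
  have hmonic := monic_g (m := m) s
  suffices H : ∀ n (P : Polynomial (MvPolynomial (Fin m) K)), P.natDegree ≤ n →
      D (P %ₘ g m s) ≤ D P from H _ P le_rfl
  intro n
  induction n using Nat.strong_induction_on with
  | _ n ih =>
    intro P hP
    by_cases hlt : P.degree < (g m s).degree
    · rw [(Polynomial.modByMonic_eq_self_iff hmonic).2 hlt]
    · have hP0 : P ≠ 0 := by
        rintro rfl
        apply hlt
        rw [Polynomial.degree_zero]
        exact bot_lt_iff_ne_bot.2 fun hb => hmonic.ne_zero (Polynomial.degree_eq_bot.1 hb)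
      have hge : (g m s).natDegree ≤ P.natDegree :=
        Polynomial.natDegree_le_natDegree (not_lt.1 hlt)
      set lc := P.leadingCoeff with hlc_def
      have hlc : lc ≠ 0 := Polynomial.leadingCoeff_ne_zero.2 hP0
      set k := P.natDegree - (g m s).natDegree with hk_def
      set Q := Polynomial.C lc * Polynomial.X ^ k * g m s with hQ_def
      have hdegQ : Q.degree = P.degree := by
        rw [hQ_def, Polynomial.degree_mul, Polynomial.degree_mul, Polynomial.degree_C hlc,
          Polynomial.degree_X_pow, Polynomial.degree_eq_natDegree hmonic.ne_zero,
          Polynomial.degree_eq_natDegree hP0, zero_add, ← Nat.cast_add]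
        congr 1
        omega
      have hlcQ : Q.leadingCoeff = P.leadingCoeff := by
        rw [hQ_def, Polynomial.leadingCoeff_mul, Polynomial.leadingCoeff_mul,
          Polynomial.leadingCoeff_C, Polynomial.leadingCoeff_X_pow, hmonic.leadingCoeff,
          mul_one, mul_one]
      have hmod : P %ₘ g m s = (P - Q) %ₘ g m s := by
        have hPeq : P = (P - Q) + (g m s) * (Polynomial.C lc * Polynomial.X ^ k) := by
          rw [hQ_def]; ring
        conv_lhs => rw [hPeq]
        rw [Polynomial.add_modByMonic, Polynomial.self_mul_modByMonic hmonic, add_zero]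
      have hdsub : (P - Q).degree < P.degree :=
        Polynomial.degree_sub_lt hdegQ.symm hP0 hlcQ.symm
      have hDQ : D Q ≤ D P := by
        have h1 : D Q ≤ (D (Polynomial.C lc) + D (Polynomial.X ^ k :
            Polynomial (MvPolynomial (Fin m) K))) + D (g m s) :=
          le_trans (D_mul_le _ _) (Nat.add_le_add_right (D_mul_le _ _) _)
        have h2 : lc.totalDegree + P.natDegree ≤ D P := by
          have : P.coeff P.natDegree ≠ 0 := by
            rw [Polynomial.coeff_natDegree]; exact hlc
          exact D_coeff_le this
        have h3 := D_C lc
        have h4 := D_X_pow (m := m) (K := K) k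
        have h5 := D_g_le (m := m) s
        have h6 := natDegree_g (m := m) s
        omega
      rw [hmod]
      by_cases hPQ : P - Q = 0
      · rw [hPQ, Polynomial.zero_modByMonic]
        simp only [D, map_zero, MvPolynomial.totalDegree_zero]
        omega
      · have hnd : (P - Q).natDegree < P.natDegree :=
          Polynomial.natDegree_lt_natDegree hPQ hdsub
        calc D ((P - Q) %ₘ g m s) ≤ D (P - Q) :=
              ih (P - Q).natDegree (by omega) _ le_rfl
          _ ≤ max (D P) (D Q) := D_sub_le _ _
          _ ≤ D P := max_le le_rfl hDQ

lemma main {K : Type*} [Field K] : ∀ (m : ℕ) (F : MvPolynomial (Fin m) K)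
    (S : Fin m → Finset K),
    (∃ s : Fin m → K, (∀ j, s j ∈ S j) ∧ MvPolynomial.eval s F ≠ 0) →
    ∃ y : Fin m → ℕ, (∀ j, 1 ≤ y j ∧ y j ≤ (S j).card) ∧
      (∑ j, (S j).card) ≤ (∑ j, y j) + F.totalDegree ∧
      (∏ j, y j) ≤
        Set.ncard {s : Fin m → K | (∀ j, s j ∈ S j) ∧ MvPolynomial.eval s F ≠ 0} := by
  intro m
  induction m with
  | zero =>
    intro F S h
    obtain ⟨s, hs, hF⟩ := h
    refine ⟨fun _ => 1, fun j => j.elim0, by simp, ?_⟩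
    have hne : {s : Fin 0 → K | (∀ j, s j ∈ S j) ∧ MvPolynomial.eval s F ≠ 0}.Nonempty :=
      ⟨s, hs, hF⟩
    have hpos := (Set.ncard_pos (Set.toFinite _)).2 hne
    simpa [Nat.one_le_iff_ne_zero, Nat.pos_iff_ne_zero] using hpos
  | succ m IH =>
    intro F S h
    classical
    obtain ⟨s, hsmem, hsF⟩ := h
    have ht : 0 < (S 0).card := Finset.card_pos.2 ⟨s 0, hsmem 0⟩
    set r := MvPolynomial.finSuccEquiv K m F %ₘ g m (S 0) with hr_def
    have hg0 : ∀ (a : Fin m → K) (x : K), x ∈ S 0 →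
        Polynomial.eval x ((g m (S 0)).map (MvPolynomial.eval a)) = 0 := by
      intro a x hx
      rw [g_eq, ← Polynomial.coe_mapRingHom, map_prod, Polynomial.eval_prod]
      refine Finset.prod_eq_zero hx ?_
      simp
    have heval : ∀ (x : K) (a : Fin m → K), x ∈ S 0 →
        MvPolynomial.eval (Fin.cons x a) F = Polynomial.eval x (r.map (MvPolynomial.eval a)) := by
      intro x a hx
      rw [MvPolynomial.eval_eq_eval_mv_eval']
      conv_lhs => rw [← Polynomial.modByMonic_add_div (MvPolynomial.finSuccEquiv K m F)
        (g m (S 0)), ← hr_def]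
      rw [Polynomial.map_add, Polynomial.map_mul, Polynomial.eval_add, Polynomial.eval_mul,
        hg0 a x hx, zero_mul, add_zero]
    have hrs : Polynomial.eval (s 0) (r.map (MvPolynomial.eval (Fin.tail s))) ≠ 0 := by
      rw [← heval (s 0) (Fin.tail s) (hsmem 0), Fin.cons_self_tail]
      exact hsF
    have hrne : r ≠ 0 := by
      intro h0
      rw [h0] at hrs
      simp at hrs
    set T := (Finset.range (r.natDegree + 1)).filter
        (fun i => ∃ a ∈ Fintype.piFinset (fun j : Fin m => S j.succ),
          MvPolynomial.eval a (r.coeff i) ≠ 0) with hT_def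
    have hTne : T.Nonempty := by
      have hmapne : r.map (MvPolynomial.eval (Fin.tail s)) ≠ 0 := by
        intro h0; rw [h0] at hrs; simp at hrs
      obtain ⟨i, hi⟩ : ∃ i, (r.map (MvPolynomial.eval (Fin.tail s))).coeff i ≠ 0 := by
        by_contra hc
        push_neg at hc
        exact hmapne (Polynomial.ext fun i => by simpa using hc i)
      rw [Polynomial.coeff_map] at hi
      have hri : r.coeff i ≠ 0 := fun h0 => hi (by rw [h0]; simp)
      refine ⟨i, Finset.mem_filter.2 ⟨Finset.mem_range.2 ?_, ⟨Fin.tail s, ?_, hi⟩⟩⟩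
      · have := Polynomial.le_natDegree_of_ne_zero hri; omega
      · exact Fintype.mem_piFinset.2 fun j => hsmem j.succ
    set d := T.max' hTne with hd_def
    have hdmem : d ∈ T := T.max'_mem hTne
    obtain ⟨hdrange, a₀, ha₀mem, ha₀⟩ := Finset.mem_filter.1 hdmem
    rw [Finset.mem_range] at hdrange
    have hdmax : ∀ i ∈ T, i ≤ d := fun i hi => Finset.le_max' T i hi
    have hdlt : d < (S 0).card := by
      have h1 : r.natDegree < (g m (S 0)).natDegree :=
        Polynomial.natDegree_lt_natDegree hrne
          (Polynomial.degree_modByMonic_lt _ (monic_g (S 0)))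
      rw [natDegree_g] at h1
      omega
    have hG0 : r.coeff d ≠ 0 := fun h0 => ha₀ (by rw [h0]; simp)
    have hdegG : (r.coeff d).totalDegree + d ≤ F.totalDegree := by
      calc (r.coeff d).totalDegree + d ≤ D r := D_coeff_le hG0
        _ ≤ D (MvPolynomial.finSuccEquiv K m F) := by
            rw [hr_def]; exact D_modByMonic_le _ ⟨s 0, hsmem 0⟩ _
        _ = F.totalDegree := D_apply F
    obtain ⟨y', hy'1, hy'2, hy'3⟩ := IH (r.coeff d) (fun j => S j.succ)
      ⟨a₀, Fintype.mem_piFinset.1 ha₀mem, ha₀⟩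
    set A := (Fintype.piFinset (fun j : Fin m => S j.succ)).filter
        (fun a => MvPolynomial.eval a (r.coeff d) ≠ 0) with hA_def
    have hAset : {a : Fin m → K | (∀ j, a j ∈ S j.succ) ∧
        MvPolynomial.eval a (r.coeff d) ≠ 0} = ↑A := by
      ext u
      simp [hA_def, Fintype.mem_piFinset]
    rw [hAset, Set.ncard_coe_finset] at hy'3
    set NN := (Fintype.piFinset S).filter (fun s => MvPolynomial.eval s F ≠ 0) with hNN_def
    have hNNset : {s : Fin (m+1) → K | (∀ j, s j ∈ S j) ∧ MvPolynomial.eval s F ≠ 0} = ↑NN := by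
      ext u
      simp [hNN_def, Fintype.mem_piFinset]
    have hBa : ∀ a ∈ A, (S 0).card - d ≤
        ((S 0).filter (fun x => MvPolynomial.eval (Fin.cons x a) F ≠ 0)).card := by
      intro a ha
      obtain ⟨hamem, haG⟩ := Finset.mem_filter.1 ha
      set q := r.map (MvPolynomial.eval a) with hq_def
      have hqcd : q.coeff d ≠ 0 := by
        rw [hq_def, Polynomial.coeff_map]; exact haG
      have hq0 : q ≠ 0 := fun h0 => hqcd (by rw [h0]; simp)
      have hqd : q.natDegree ≤ d := by
        rw [Polynomial.natDegree_le_iff_coeff_eq_zero]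
        intro N hN
        rw [hq_def, Polynomial.coeff_map]
        by_contra hne
        have hrN : r.coeff N ≠ 0 := fun h0 => hne (by rw [h0]; simp)
        have hNT : N ∈ T := Finset.mem_filter.2
          ⟨Finset.mem_range.2 (by have := Polynomial.le_natDegree_of_ne_zero hrN; omega),
            ⟨a, hamem, hne⟩⟩
        have := hdmax N hNT
        omega
      have hzero : ((S 0).filter (fun x => MvPolynomial.eval (Fin.cons x a) F = 0)).card ≤ d := by
        have hsub : (S 0).filter (fun x => MvPolynomial.eval (Fin.cons x a) F = 0) ⊆
            q.roots.toFinset := by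
          intro x hx
          obtain ⟨hxS, hxz⟩ := Finset.mem_filter.1 hx
          rw [heval x a hxS] at hxz
          rw [Multiset.mem_toFinset, Polynomial.mem_roots hq0]
          exact hxz
        calc ((S 0).filter (fun x => MvPolynomial.eval (Fin.cons x a) F = 0)).card
            ≤ q.roots.toFinset.card := Finset.card_le_card hsub
          _ ≤ Multiset.card q.roots := Multiset.toFinset_card_le _
          _ ≤ q.natDegree := Polynomial.card_roots' q
          _ ≤ d := hqd
      have h5 := Finset.card_filter_add_card_filter_not (s := S 0)
        (p := fun x => MvPolynomial.eval (Fin.cons x a) F = 0)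
      simp only [ne_eq]
      omega
    have hinj : ∀ a : Fin m → K,
        Function.Injective (fun x : K => (Fin.cons x a : Fin (m+1) → K)) := by
      intro a x y hxy
      simpa using congrFun hxy 0
    have hdisj : ∀ a ∈ A, ∀ b ∈ A, a ≠ b → Disjoint
        (((S 0).filter fun x => MvPolynomial.eval (Fin.cons x a) F ≠ 0).image
          fun x => (Fin.cons x a : Fin (m+1) → K))
        (((S 0).filter fun x => MvPolynomial.eval (Fin.cons x b) F ≠ 0).image
          fun x => (Fin.cons x b : Fin (m+1) → K)) := by
      intro a _ b _ hab
      rw [Finset.disjoint_left]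
      rintro u hu1 hu2
      obtain ⟨x, _, rfl⟩ := Finset.mem_image.1 hu1
      obtain ⟨x', _, h2⟩ := Finset.mem_image.1 hu2
      apply hab
      have := congrArg Fin.tail h2
      simpa [Fin.tail_cons] using this.symm
    have hbi : (A.biUnion fun a => ((S 0).filter
        (fun x => MvPolynomial.eval (Fin.cons x a) F ≠ 0)).image
          fun x => (Fin.cons x a : Fin (m+1) → K)) ⊆ NN := by
      intro u hu
      simp only [Finset.mem_biUnion, Finset.mem_image, Finset.mem_filter] at hu
      obtain ⟨a, ha, x, ⟨hxS, hxne⟩, rfl⟩ := hu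
      refine Finset.mem_filter.2 ⟨Fintype.mem_piFinset.2 ?_, hxne⟩
      intro j
      refine Fin.cases ?_ ?_ j
      · simpa using hxS
      · intro jj
        simpa using Fintype.mem_piFinset.1 (Finset.mem_filter.1 ha).1 jj
    have hcard : A.card * ((S 0).card - d) ≤ NN.card := by
      calc A.card * ((S 0).card - d) = ∑ _a ∈ A, ((S 0).card - d) := by
            rw [Finset.sum_const, smul_eq_mul]
        _ ≤ ∑ a ∈ A, ((S 0).filter
              (fun x => MvPolynomial.eval (Fin.cons x a) F ≠ 0)).card :=
            Finset.sum_le_sum hBa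
        _ = ∑ a ∈ A, (((S 0).filter
              (fun x => MvPolynomial.eval (Fin.cons x a) F ≠ 0)).image
                fun x => (Fin.cons x a : Fin (m+1) → K)).card :=
            Finset.sum_congr rfl fun a _ => (Finset.card_image_of_injective _ (hinj a)).symm
        _ = (A.biUnion fun a => ((S 0).filter
              (fun x => MvPolynomial.eval (Fin.cons x a) F ≠ 0)).image
                fun x => (Fin.cons x a : Fin (m+1) → K)).card :=
            (Finset.card_biUnion hdisj).symm
        _ ≤ NN.card := Finset.card_le_card hbi
    refine ⟨Fin.cons ((S 0).card - d) y', ?_, ?_, ?_⟩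
    · intro j
      refine Fin.cases ?_ ?_ j
      · simp only [Fin.cons_zero]
        omega
      · intro jj
        simpa using hy'1 jj
    · rw [Fin.sum_univ_succ, Fin.sum_univ_succ]
      simp only [Fin.cons_zero, Fin.cons_succ]
      omega
    · rw [Fin.prod_univ_succ]
      simp only [Fin.cons_zero, Fin.cons_succ]
      rw [hNNset, Set.ncard_coe_finset]
      calc ((S 0).card - d) * ∏ j, y' j ≤ ((S 0).card - d) * A.card :=
            Nat.mul_le_mul_left _ hy'3
        _ = A.card * ((S 0).card - d) := mul_comm _ _
        _ ≤ NN.card := hcard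

end AlonFurediAux

/-- Alon–Füredi bound on the number of nonzeros of a polynomial in a grid. -/
theorem alon_furedi {K : Type*} [Field K] {m : ℕ} (F : MvPolynomial (Fin m) K)
    (S : Fin m → Finset K)
    (h : ∃ s : Fin m → K, (∀ j, s j ∈ S j) ∧ MvPolynomial.eval s F ≠ 0) :
    ((sInf {n : ℕ | ∃ y : Fin m → ℕ, (∀ j, 1 ≤ y j ∧ y j ≤ (S j).card) ∧
        (∑ j, (S j).card) ≤ (∑ j, y j) + F.totalDegree ∧ n = ∏ j, y j} : ℕ) : ℕ∞)
      ≤ {s : Fin m → K | (∀ j, s j ∈ S j) ∧ MvPolynomial.eval s F ≠ 0}.encard := by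
  classical
  obtain ⟨y, hy1, hy2, hy3⟩ := AlonFurediAux.main m F S h
  have hmem : (∏ j, y j) ∈ {n : ℕ | ∃ y : Fin m → ℕ, (∀ j, 1 ≤ y j ∧ y j ≤ (S j).card) ∧
      (∑ j, (S j).card) ≤ (∑ j, y j) + F.totalDegree ∧ n = ∏ j, y j} := ⟨y, hy1, hy2, rfl⟩
  have hInf := Nat.sInf_le hmem
  set NN := (Fintype.piFinset S).filter (fun s => MvPolynomial.eval s F ≠ 0) with hNN_def
  have hset : {s : Fin m → K | (∀ j, s j ∈ S j) ∧ MvPolynomial.eval s F ≠ 0} = ↑NN := by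
    ext u
    simp [hNN_def, Fintype.mem_piFinset]
  rw [hset, Set.encard_coe_eq_coe_finsetCard]
  rw [hset, Set.ncard_coe_finset] at hy3
  exact_mod_cast hInf.trans hy3
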